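/- For every positive integer n and integer r ≥ 0, the normalization factor a_r := n^{-1} ∑_{t=1}^n |1 - e^{2πit/n}|^{2r} equals the central binomial coefficient C(2r, r), provided n > 2r. -/

import Mathlib

open Complex Finset

/-- Geometric-sum orthogonality: if `y ^ n = 1` and `y ≠ 1` then `∑_{t=1}^n y^t = 0`. -/
lemma sum_Icc_pow_eq_zero {n : ℕ} (y : ℂ) (hyn : y ^ n = 1) (hy1 : y ≠ 1) :
    ∑ t ∈ Finset.Icc 1 n, y ^ t = 0 := by
  have h : ∑ t ∈ Finset.Icc 1 n, y ^ t = y * ∑ t ∈ Finset.range n, y ^ t := by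
    rw [Finset.mul_sum, ← Finset.Ico_add_one_right_eq_Icc, Finset.sum_Ico_eq_sum_range]
    simp [pow_add, pow_succ, mul_comm]
  rw [h, geom_sum_eq hy1, hyn]
  simp

/-- For every positive integer `n` and integer `r ≥ 0` with `n > 2r`, the normalization
factor `a_r = n⁻¹ ∑_{t=1}^n |1 - e^{2πit/n}|^{2r}` equals the central binomial
coefficient `C(2r, r)`. -/
theorem taper_normalization_eq_centralBinom (n r : ℕ) (hn : 0 < n) (hnr : 2 * r < n) :
    (n : ℝ)⁻¹ * ∑ t ∈ Finset.Icc 1 n,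
        ‖1 - Complex.exp (2 * Real.pi * Complex.I * t / n)‖ ^ (2 * r)
      = (Nat.choose (2 * r) r : ℝ) := by
  have hn0 : (n : ℝ) ≠ 0 := Nat.cast_ne_zero.mpr hn.ne'
  rw [inv_mul_eq_div, div_eq_iff hn0]
  set ω : ℂ := Complex.exp (2 * Real.pi * Complex.I / n) with hωdef
  have hprim : IsPrimitiveRoot ω n := Complex.isPrimitiveRoot_exp n hn.ne'
  have hωn : ω ^ n = 1 := hprim.pow_eq_one
  have hω0 : ω ≠ 0 := Complex.exp_ne_zero _
  have habs : ‖ω‖ = 1 := by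
    rw [hωdef, Complex.norm_exp]
    norm_num [Complex.div_re]
  have hexp : ∀ t : ℕ, Complex.exp (2 * Real.pi * Complex.I * t / n) = ω ^ t := by
    intro t
    rw [hωdef, ← Complex.exp_nat_mul]
    congr 1
    ring
  -- per-term complex identity
  have hterm : ∀ t : ℕ, ((Complex.normSq (1 - ω ^ t) : ℝ) : ℂ) ^ r
      = ∑ k ∈ Finset.range (2 * r + 1),
          (-1 : ℂ) ^ (r + k) * (Nat.choose (2 * r) k : ℂ) * (ω ^ k * (ω ^ r)⁻¹) ^ t := by
    intro t
    set w : ℂ := ω ^ t with hw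
    have hw0 : w ≠ 0 := pow_ne_zero _ hω0
    have hconj : (starRingEnd ℂ) (1 - w) = 1 - w⁻¹ := by
      rw [map_sub, map_one, hw, map_pow, ← Complex.inv_eq_conj habs, inv_pow]
    have h1 : ((Complex.normSq (1 - w) : ℝ) : ℂ) = (1 - w) * (1 - w⁻¹) := by
      rw [← Complex.mul_conj, hconj]
    have h2 : (1 - w) * (1 - w⁻¹) = (-1) * (1 - w) ^ 2 * w⁻¹ := by
      field_simp
      ring
    have h3 : ((Complex.normSq (1 - w) : ℝ) : ℂ) ^ r
        = (-1 : ℂ) ^ r * (w ^ r)⁻¹ * (1 - w) ^ (2 * r) := by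
      rw [h1, h2, mul_pow, mul_pow, inv_pow, pow_mul]
      ring
    have hbinom : (1 - w) ^ (2 * r)
        = ∑ k ∈ Finset.range (2 * r + 1), (-w) ^ k * (Nat.choose (2 * r) k : ℂ) := by
      have := add_pow (-w) 1 (2 * r)
      simp only [one_pow, mul_one] at this
      rw [sub_eq_add_neg, add_comm, this]
    rw [h3, hbinom, Finset.mul_sum]
    refine Finset.sum_congr rfl fun k _ => ?_
    have : (-w) ^ k = (-1 : ℂ) ^ k * w ^ k := by rw [neg_pow]
    rw [this]
    have hwk : w ^ k = (ω ^ k) ^ t := by rw [hw, ← pow_mul, ← pow_mul, mul_comm]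
    have hwr : (w ^ r)⁻¹ = ((ω ^ r)⁻¹) ^ t := by
      rw [hw, inv_pow, ← pow_mul, ← pow_mul, mul_comm]
    rw [mul_pow, ← hwk, ← hwr, pow_add]
    ring
  -- the inner geometric sums
  have hinner : ∀ k ∈ Finset.range (2 * r + 1),
      ∑ t ∈ Finset.Icc 1 n, (ω ^ k * (ω ^ r)⁻¹) ^ t
        = if k = r then (n : ℂ) else 0 := by
    intro k hk
    have hk' : k < 2 * r + 1 := Finset.mem_range.mp hk
    by_cases hkr : k = r
    · subst hkr
      rw [mul_inv_cancel₀ (pow_ne_zero _ hω0)]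
      simp
    · rw [if_neg hkr]
      refine sum_Icc_pow_eq_zero _ ?_ ?_
      · rw [mul_pow, inv_pow, ← pow_mul, ← pow_mul, mul_comm k n, mul_comm r n,
          pow_mul, pow_mul, hωn, one_pow, one_pow, inv_one, mul_one]
      · intro h
        apply hkr
        have hωk : ω ^ k = ω ^ r := by
          have := congrArg (· * ω ^ r) h
          simpa [mul_assoc, inv_mul_cancel₀ (pow_ne_zero r hω0)] using this
        exact hprim.pow_inj (by omega) (by omega) hωk
  -- the key complex identity
  have key : ∑ t ∈ Finset.Icc 1 n, ((Complex.normSq (1 - ω ^ t) : ℝ) : ℂ) ^ r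
      = (Nat.choose (2 * r) r : ℂ) * n := by
    calc ∑ t ∈ Finset.Icc 1 n, ((Complex.normSq (1 - ω ^ t) : ℝ) : ℂ) ^ r
        = ∑ t ∈ Finset.Icc 1 n, ∑ k ∈ Finset.range (2 * r + 1),
            (-1 : ℂ) ^ (r + k) * (Nat.choose (2 * r) k : ℂ) * (ω ^ k * (ω ^ r)⁻¹) ^ t := by
          exact Finset.sum_congr rfl fun t _ => hterm t
      _ = ∑ k ∈ Finset.range (2 * r + 1), (-1 : ℂ) ^ (r + k) * (Nat.choose (2 * r) k : ℂ) *
            ∑ t ∈ Finset.Icc 1 n, (ω ^ k * (ω ^ r)⁻¹) ^ t := by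
          rw [Finset.sum_comm]
          exact Finset.sum_congr rfl fun k _ => by rw [Finset.mul_sum]
      _ = ∑ k ∈ Finset.range (2 * r + 1), (-1 : ℂ) ^ (r + k) * (Nat.choose (2 * r) k : ℂ) *
            (if k = r then (n : ℂ) else 0) := by
          exact Finset.sum_congr rfl fun k hk => by rw [hinner k hk]
      _ = (Nat.choose (2 * r) r : ℂ) * n := by
          rw [Finset.sum_eq_single r
            (fun k _ hkr => by rw [if_neg hkr, mul_zero])
            (fun h => absurd (Finset.mem_range.mpr (by omega)) h)]
          rw [if_pos rfl, show r + r = 2 * r by ring, pow_mul]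
          norm_num
  -- conclude over ℝ
  have hreal : ∀ t : ℕ,
      ‖1 - Complex.exp (2 * Real.pi * Complex.I * t / n)‖ ^ (2 * r)
        = Complex.normSq (1 - ω ^ t) ^ r := by
    intro t
    rw [hexp t, pow_mul, Complex.sq_norm]
  rw [Finset.sum_congr rfl fun t _ => hreal t]
  have : ((∑ t ∈ Finset.Icc 1 n, Complex.normSq (1 - ω ^ t) ^ r : ℝ) : ℂ)
      = (((Nat.choose (2 * r) r : ℝ) * n : ℝ) : ℂ) := by
    push_cast
    exact key
  exact_mod_cast this
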